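/- Let k be an algebraically closed field of characteristic p > 0, q a power of p, and A ∈ M_3(k) of rank 2. Then the plane curve X_A ⊂ P^2 defined by ∑ a_ij x_i x_j^q = 0 is projectively isomorphic to exactly one of: X_0 : x_0^q x_1 + x_1^q x_2 = 0, X_1 : x_0^{q+1} + x_1^q x_2 = 0, X_2 : x_0^{q+1} + x_1^{q+1} = 0. -/

import Mathlib

open Matrix

/-- `A ∼ λB` for some scalar `λ ≠ 0`: the curves `X_A` and `X_B` are projectively
isomorphic. -/
def ProjIso {k : Type*} [Field k] (q : ℕ) (A B : Matrix (Fin 3) (Fin 3) k) : Prop :=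
  ∃ (T : Matrix (Fin 3) (Fin 3) k) (lam : k), IsUnit T.det ∧ lam ≠ 0 ∧
    Tᵀ * A * T.map (fun x => x ^ q) = lam • B

namespace RankTwoAux

variable {k : Type*} [Field k]

theorem qtwo {p q e : ℕ} (hp : p.Prime) (he : 0 < e) (hq : q = p ^ e) : 2 ≤ q := by
  subst hq
  calc 2 ≤ p := hp.two_le
    _ = p ^ 1 := (pow_one p).symm
    _ ≤ p ^ e := Nat.pow_le_pow_right hp.pos he

theorem qadd {p : ℕ} [CharP k p] (hp : p.Prime) {q e : ℕ} (hq : q = p ^ e) (x y : k) :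
    (x + y) ^ q = x ^ q + y ^ q := by
  haveI : Fact p.Prime := ⟨hp⟩
  subst hq
  exact add_pow_char_pow x y p e

theorem qneg {p : ℕ} [CharP k p] (hp : p.Prime) {q e : ℕ} (hq : q = p ^ e) (x : k) :
    (-x) ^ q = -(x ^ q) := by
  haveI : Fact p.Prime := ⟨hp⟩
  subst hq
  rw [← zero_sub, sub_pow_char_pow, zero_pow (pow_ne_zero e hp.ne_zero), zero_sub]

theorem qadd3 {p : ℕ} [CharP k p] (hp : p.Prime) {q e : ℕ} (hq : q = p ^ e) (x y z : k) :
    (x + y + z) ^ q = x ^ q + y ^ q + z ^ q := by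
  rw [qadd hp hq, qadd hp hq]

theorem qinj {p : ℕ} [CharP k p] (hp : p.Prime) {q e : ℕ} (hq : q = p ^ e) {x y : k}
    (h : x ^ q = y ^ q) : x = y := by
  haveI : Fact p.Prime := ⟨hp⟩
  subst hq
  have h2 : (x - y) ^ p ^ e = 0 := by rw [sub_pow_char_pow, h, sub_self]
  have h3 : x - y = 0 := by
    have hne : p ^ e ≠ 0 := pow_ne_zero e hp.ne_zero
    exact pow_eq_zero_iff hne |>.mp h2
  exact sub_eq_zero.mp h3


theorem qroot {q : ℕ} [IsAlgClosed k] (hq0 : 0 < q) (a : k) : ∃ b : k, b ^ q = a :=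
  IsAlgClosed.exists_pow_nat_eq a hq0

/-- coordinatewise `q`-th power of a vector -/
def qv (q : ℕ) (v : Fin 3 → k) : Fin 3 → k := fun i => v i ^ q

theorem qv_add {p : ℕ} [CharP k p] (hp : p.Prime) {q e : ℕ} (hq : q = p ^ e) (x y : Fin 3 → k) :
    qv q (x + y) = qv q x + qv q y := by
  funext i; exact qadd hp hq (x i) (y i)

theorem qv_smul (q : ℕ) (c : k) (x : Fin 3 → k) : qv q (c • x) = c ^ q • qv q x := by
  funext i; simp [qv, mul_pow]

theorem qv_zero {q : ℕ} (hq0 : q ≠ 0) : qv q (0 : Fin 3 → k) = 0 := by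
  funext i; simp [qv, zero_pow hq0]

theorem qv_eq_zero {q : ℕ} (hq0 : q ≠ 0) {v : Fin 3 → k} (h : qv q v = 0) : v = 0 := by
  funext i
  have := congrFun h i
  simpa [qv, pow_eq_zero_iff hq0] using this

theorem qv_root {q : ℕ} [IsAlgClosed k] (hq0 : 0 < q) (v : Fin 3 → k) :
    ∃ u : Fin 3 → k, qv q u = v := by
  choose u hu using fun i => qroot hq0 (v i)
  exact ⟨u, funext hu⟩

theorem qv_inj {p : ℕ} [CharP k p] (hp : p.Prime) {q e : ℕ} (hq : q = p ^ e)
    {x y : Fin 3 → k} (h : qv q x = qv q y) : x = y := by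
  funext i; exact qinj hp hq (congrFun h i)

theorem dot_qv {p : ℕ} [CharP k p] (hp : p.Prime) {q e : ℕ} (hq : q = p ^ e)
    (x y : Fin 3 → k) : qv q x ⬝ᵥ qv q y = (x ⬝ᵥ y) ^ q := by
  simp only [dotProduct, qv, Fin.sum_univ_three, qadd3 hp hq, mul_pow]

/-- the twisted pairing `x ⬝ A y^{(q)}` -/
def pr (q : ℕ) (A : Matrix (Fin 3) (Fin 3) k) (x y : Fin 3 → k) : k :=
  x ⬝ᵥ (A *ᵥ qv q y)

theorem pr_eq_vecMul (q : ℕ) (A : Matrix (Fin 3) (Fin 3) k) (x y : Fin 3 → k) :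
    pr q A x y = (x ᵥ* A) ⬝ᵥ qv q y := dotProduct_mulVec x A (qv q y)

theorem pr_add_left (q : ℕ) (A : Matrix (Fin 3) (Fin 3) k) (x x' y : Fin 3 → k) :
    pr q A (x + x') y = pr q A x y + pr q A x' y := add_dotProduct x x' _

theorem pr_smul_left (q : ℕ) (A : Matrix (Fin 3) (Fin 3) k) (c : k) (x y : Fin 3 → k) :
    pr q A (c • x) y = c * pr q A x y := by
  rw [pr, pr, smul_dotProduct, smul_eq_mul]

theorem pr_add_right {p : ℕ} [CharP k p] (hp : p.Prime) {q e : ℕ} (hq : q = p ^ e)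
    (A : Matrix (Fin 3) (Fin 3) k) (x y y' : Fin 3 → k) :
    pr q A x (y + y') = pr q A x y + pr q A x y' := by
  rw [pr, pr, pr, qv_add hp hq, mulVec_add, dotProduct_add]

theorem pr_smul_right (q : ℕ) (A : Matrix (Fin 3) (Fin 3) k) (c : k) (x y : Fin 3 → k) :
    pr q A x (c • y) = c ^ q * pr q A x y := by
  rw [pr, pr, qv_smul, mulVec_smul, dotProduct_smul, smul_eq_mul]

theorem pr_left_zero (q : ℕ) (A : Matrix (Fin 3) (Fin 3) k) {x : Fin 3 → k} (y : Fin 3 → k)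
    (h : x ᵥ* A = 0) : pr q A x y = 0 := by
  rw [pr_eq_vecMul, h, zero_dotProduct]

theorem pr_right_zero (q : ℕ) (A : Matrix (Fin 3) (Fin 3) k) (x : Fin 3 → k) {y : Fin 3 → k}
    (h : A *ᵥ qv q y = 0) : pr q A x y = 0 := by
  rw [pr, h, dotProduct_zero]

theorem dot3 {x0 x1 x2 : Fin 3 → k} {c0 c1 c2 : k}
    (h : c0 • x0 + c1 • x1 + c2 • x2 = 0) (z : Fin 3 → k) :
    c0 * (x0 ⬝ᵥ z) + c1 * (x1 ⬝ᵥ z) + c2 * (x2 ⬝ᵥ z) = 0 := by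
  have := congrArg (fun v : Fin 3 → k => v ⬝ᵥ z) h
  simpa [add_dotProduct, smul_dotProduct] using this

theorem qv_rel {p : ℕ} [CharP k p] (hp : p.Prime) {q e : ℕ} (hq : q = p ^ e)
    {x0 x1 x2 : Fin 3 → k} {c0 c1 c2 : k} (h : c0 • x0 + c1 • x1 + c2 • x2 = 0)
    (hq0 : q ≠ 0) :
    c0 ^ q • qv q x0 + c1 ^ q • qv q x1 + c2 ^ q • qv q x2 = 0 := by
  have := congrArg (qv q) h
  rw [qv_add hp hq, qv_add hp hq, qv_smul, qv_smul, qv_smul, qv_zero hq0] at this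
  exact this

/-- if `y` is orthogonal to three independent vectors then `y = 0`. -/
theorem dots_eq_zero (v0 v1 v2 : Fin 3 → k)
    (hind : ∀ c0 c1 c2 : k, c0 • v0 + c1 • v1 + c2 • v2 = 0 → c0 = 0 ∧ c1 = 0 ∧ c2 = 0)
    {y : Fin 3 → k} (h0 : v0 ⬝ᵥ y = 0) (h1 : v1 ⬝ᵥ y = 0) (h2 : v2 ⬝ᵥ y = 0) : y = 0 := by
  by_contra hy
  have hdet : (Matrix.of ![v0, v1, v2]).det = 0 := by
    rw [← Matrix.exists_mulVec_eq_zero_iff]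
    refine ⟨y, hy, ?_⟩
    funext i
    fin_cases i <;> simpa [Matrix.mulVec, dotProduct] using
      (by assumption : _ ⬝ᵥ y = 0)
  obtain ⟨c, hc, hc0⟩ := Matrix.exists_vecMul_eq_zero_iff.mpr hdet
  apply hc
  have h3 := hind (c 0) (c 1) (c 2) ?_
  · funext i; fin_cases i <;> simp [h3.1, h3.2.1, h3.2.2]
  · funext j
    have := congrFun hc0 j
    simpa [Matrix.vecMul, dotProduct, Fin.sum_univ_three] using this


/-- the kernel of a rank-2 matrix is spanned by one nonzero vector -/
theorem ker_rank_two (A : Matrix (Fin 3) (Fin 3) k) (hA : A.rank = 2) :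
    ∃ v : Fin 3 → k, v ≠ 0 ∧ A *ᵥ v = 0 ∧ ∀ x, A *ᵥ x = 0 → ∃ c : k, x = c • v := by
  have hfin : Module.finrank k (LinearMap.ker A.mulVecLin) = 1 := by
    have h := LinearMap.finrank_range_add_finrank_ker A.mulVecLin
    have h3 : Module.finrank k (Fin 3 → k) = 3 := by simp
    rw [h3] at h
    have hr : Module.finrank k (LinearMap.range A.mulVecLin) = 2 := hA
    omega
  have hne : LinearMap.ker A.mulVecLin ≠ ⊥ := by
    intro hbot
    rw [hbot, finrank_bot] at hfin
    exact absurd hfin (by norm_num)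
  obtain ⟨v, hvmem, hv0⟩ := Submodule.ne_bot_iff _ |>.mp hne
  refine ⟨v, hv0, hvmem, ?_⟩
  intro x hx
  have hle : (Submodule.span k {v} : Submodule k (Fin 3 → k)) ≤ LinearMap.ker A.mulVecLin := by
    rw [Submodule.span_le, Set.singleton_subset_iff]
    exact hvmem
  have hsp : Module.finrank k (Submodule.span k {v} : Submodule k (Fin 3 → k)) = 1 :=
    finrank_span_singleton hv0
  have heq : (Submodule.span k {v} : Submodule k (Fin 3 → k)) = LinearMap.ker A.mulVecLin :=
    Submodule.eq_of_le_of_finrank_le hle (by rw [hsp, hfin])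
  have hxmem : x ∈ (Submodule.span k {v} : Submodule k (Fin 3 → k)) := by
    rw [heq]; exact hx
  obtain ⟨c, hc⟩ := Submodule.mem_span_singleton.mp hxmem
  exact ⟨c, hc.symm⟩

theorem ker_rank_two_left (A : Matrix (Fin 3) (Fin 3) k) (hA : A.rank = 2) :
    ∃ w : Fin 3 → k, w ≠ 0 ∧ w ᵥ* A = 0 ∧ ∀ x, x ᵥ* A = 0 → ∃ c : k, x = c • w := by
  have hAt : Aᵀ.rank = 2 := by rw [Matrix.rank_transpose]; exact hA
  obtain ⟨w, hw0, hker, hchar⟩ := ker_rank_two Aᵀ hAt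
  rw [Matrix.mulVec_transpose] at hker
  refine ⟨w, hw0, hker, ?_⟩
  intro x hx
  exact hchar x (by rw [Matrix.mulVec_transpose]; exact hx)

theorem entry_eq (q : ℕ) (A T : Matrix (Fin 3) (Fin 3) k) (i j : Fin 3) :
    (Tᵀ * A * T.map (fun x => x ^ q)) i j =
      (fun a => T a i) ⬝ᵥ (A *ᵥ fun b => T b j ^ q) := by
  simp only [Matrix.mul_apply, Matrix.transpose_apply, Matrix.map_apply, dotProduct,
    Matrix.mulVec, Fin.sum_univ_three]
  ring

/-- build a `ProjIso` from a suitable triple of vectors -/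
theorem build (q : ℕ) (A X : Matrix (Fin 3) (Fin 3) k) (t0 t1 t2 : Fin 3 → k) (lam : k)
    (hlam : lam ≠ 0)
    (hind : ∀ c0 c1 c2 : k, c0 • t0 + c1 • t1 + c2 • t2 = 0 → c0 = 0 ∧ c1 = 0 ∧ c2 = 0)
    (hG : ∀ i j, pr q A (![t0, t1, t2] i) (![t0, t1, t2] j) = lam * X i j) :
    ProjIso q A X := by
  refine ⟨Matrix.of fun i j => ![t0, t1, t2] j i, lam, ?_, hlam, ?_⟩
  · rw [isUnit_iff_ne_zero]
    intro hdet
    obtain ⟨c, hc, hc0⟩ := Matrix.exists_mulVec_eq_zero_iff.mpr hdet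
    apply hc
    have h3 := hind (c 0) (c 1) (c 2) ?_
    · funext i; fin_cases i <;> simp [h3.1, h3.2.1, h3.2.2]
    · funext i
      have := congrFun hc0 i
      simpa [Matrix.mulVec, dotProduct, Fin.sum_univ_three, mul_comm] using this
  · ext i j
    rw [entry_eq]
    have := hG i j
    rw [pr] at this
    have h1 : (fun a => (Matrix.of fun i j => ![t0, t1, t2] j i) a i) = ![t0, t1, t2] i := by
      funext a; fin_cases i <;> rfl
    have h2 : (fun b => (Matrix.of fun i j => ![t0, t1, t2] j i) b j ^ q) =
        qv q (![t0, t1, t2] j) := by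
      funext b; fin_cases j <;> rfl
    rw [h1, h2]
    simpa [Matrix.smul_apply, smul_eq_mul] using this


theorem map_q_mul {p : ℕ} [CharP k p] (hp : p.Prime) {q e : ℕ} (hq : q = p ^ e)
    (M N : Matrix (Fin 3) (Fin 3) k) :
    (M * N).map (fun x : k => x ^ q) = M.map (fun x : k => x ^ q) * N.map (fun x : k => x ^ q) := by
  haveI : Fact p.Prime := ⟨hp⟩
  subst hq
  have hfun : (fun x : k => x ^ p ^ e) = ⇑(iterateFrobenius k p e) := by
    funext x; rw [iterateFrobenius_def]
  rw [hfun, Matrix.map_mul]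

theorem map_q_one {q : ℕ} (hq0 : q ≠ 0) :
    (1 : Matrix (Fin 3) (Fin 3) k).map (fun x : k => x ^ q) = 1 :=
  Matrix.map_one _ (zero_pow hq0) (one_pow q)

theorem projIso_trans {p : ℕ} [CharP k p] (hp : p.Prime) {q e : ℕ} (hq : q = p ^ e)
    {A B C : Matrix (Fin 3) (Fin 3) k} (h1 : ProjIso q A B) (h2 : ProjIso q B C) :
    ProjIso q A C := by
  obtain ⟨T, lam, hT, hlam, hTe⟩ := h1
  obtain ⟨S, mu, hS, hmu, hSe⟩ := h2
  refine ⟨T * S, lam * mu, by rw [Matrix.det_mul]; exact hT.mul hS, mul_ne_zero hlam hmu, ?_⟩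
  rw [Matrix.transpose_mul, map_q_mul hp hq]
  calc (Sᵀ * Tᵀ) * A * (T.map (fun x : k => x ^ q) * S.map (fun x : k => x ^ q))
      = Sᵀ * (Tᵀ * A * T.map (fun x : k => x ^ q)) * S.map (fun x : k => x ^ q) := by
        simp only [Matrix.mul_assoc]
    _ = Sᵀ * (lam • B) * S.map (fun x : k => x ^ q) := by rw [hTe]
    _ = lam • (Sᵀ * B * S.map (fun x : k => x ^ q)) := by
        rw [Matrix.mul_smul, Matrix.smul_mul]
    _ = lam • (mu • C) := by rw [hSe]
    _ = (lam * mu) • C := by rw [smul_smul]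

theorem projIso_symm {p : ℕ} [CharP k p] (hp : p.Prime) {q e : ℕ} (hq : q = p ^ e)
    {A B : Matrix (Fin 3) (Fin 3) k} (h : ProjIso q A B) : ProjIso q B A := by
  have hq0 : q ≠ 0 := by subst hq; exact pow_ne_zero e hp.ne_zero
  obtain ⟨T, lam, hT, hlam, hTe⟩ := h
  refine ⟨T⁻¹, lam⁻¹, T.isUnit_nonsing_inv_det hT, inv_ne_zero hlam, ?_⟩
  have hTT : T * T⁻¹ = 1 := Matrix.mul_nonsing_inv T hT
  have hB : B = lam⁻¹ • (Tᵀ * A * T.map (fun x : k => x ^ q)) := by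
    rw [hTe, smul_smul, inv_mul_cancel₀ hlam, one_smul]
  rw [hB]
  rw [Matrix.mul_smul, Matrix.smul_mul]
  congr 1
  calc T⁻¹ᵀ * (Tᵀ * A * T.map (fun x : k => x ^ q)) * T⁻¹.map (fun x : k => x ^ q)
      = (T⁻¹ᵀ * Tᵀ) * A * (T.map (fun x : k => x ^ q) * T⁻¹.map (fun x : k => x ^ q)) := by
        simp only [Matrix.mul_assoc]
    _ = A := by
        rw [← Matrix.transpose_mul, ← map_q_mul hp hq, hTT, Matrix.transpose_one,
          map_q_one hq0, Matrix.one_mul, Matrix.mul_one]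

theorem vecMul_zero_of_unit {T : Matrix (Fin 3) (Fin 3) k} (hT : IsUnit T.det)
    {c : Fin 3 → k} (hc : c ᵥ* T = 0) : c = 0 := by
  by_contra h
  have : T.det = 0 := Matrix.exists_vecMul_eq_zero_iff.mp ⟨c, h, hc⟩
  rw [this] at hT
  exact absurd hT (by simp)

theorem mulVec_zero_of_unit {T : Matrix (Fin 3) (Fin 3) k} (hT : IsUnit T.det)
    {c : Fin 3 → k} (hc : T *ᵥ c = 0) : c = 0 := by
  by_contra h
  have : T.det = 0 := Matrix.exists_mulVec_eq_zero_iff.mp ⟨c, h, hc⟩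
  rw [this] at hT
  exact absurd hT (by simp)

theorem rows_q_zero_of_unit {p : ℕ} [CharP k p] [IsAlgClosed k] (hp : p.Prime) {q e : ℕ}
    (he : 0 < e) (hq : q = p ^ e) {T : Matrix (Fin 3) (Fin 3) k} (hT : IsUnit T.det)
    {c : Fin 3 → k} (hc : ∀ j, c 0 * T 0 j ^ q + c 1 * T 1 j ^ q + c 2 * T 2 j ^ q = 0) :
    c = 0 := by
  have hq0 : 0 < q := by subst hq; exact pow_pos hp.pos e
  choose r hr using fun i => qroot (k := k) hq0 (c i)
  have hrv : r ᵥ* T = 0 := by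
    apply qv_eq_zero hq0.ne'
    funext j
    have hvj : (r ᵥ* T) j = r 0 * T 0 j + r 1 * T 1 j + r 2 * T 2 j := by
      simp [Matrix.vecMul, dotProduct, Fin.sum_univ_three]
    have : (r ᵥ* T) j ^ q = 0 := by
      rw [hvj, qadd3 hp hq, mul_pow, mul_pow, mul_pow, hr 0, hr 1, hr 2]
      exact hc j
    simpa [qv] using this
  have := vecMul_zero_of_unit hT hrv
  funext i
  have hri : r i = 0 := congrFun this i
  rw [← hr i, hri, zero_pow hq0.ne']
  simp


theorem vecMul_three (c0 c1 c2 : k) (T : Matrix (Fin 3) (Fin 3) k) :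
    (![c0,c1,c2] ᵥ* T) = fun j => c0 * T 0 j + c1 * T 1 j + c2 * T 2 j := by
  funext j; simp [Matrix.vecMul, dotProduct, Fin.sum_univ_three]

theorem mulVec_three (T : Matrix (Fin 3) (Fin 3) k) (y : Fin 3 → k) :
    (T *ᵥ y) = fun i => T i 0 * y 0 + T i 1 * y 1 + T i 2 * y 2 := by
  funext i; simp [Matrix.mulVec, dotProduct, Fin.sum_univ_three]

section NonIso

variable {p q e : ℕ} [CharP k p] [IsAlgClosed k]

theorem noniso01 (hp : p.Prime) (he : 0 < e) (hq : q = p ^ e) :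
    ¬ ProjIso q (!![0,0,0;1,0,0;0,1,0] : Matrix (Fin 3) (Fin 3) k) !![1,0,0;0,0,0;0,1,0] := by
  have hq0 : q ≠ 0 := by subst hq; exact pow_ne_zero e hp.ne_zero
  rintro ⟨T, lam, hT, hlam, heq⟩
  have hE : ∀ i j, T 1 i * T 0 j ^ q + T 2 i * T 1 j ^ q =
      lam * (!![(1:k),0,0;0,0,0;0,1,0]) i j := by
    intro i j
    have h := congrFun (congrFun heq i) j
    fin_cases i <;> fin_cases j <;>
      · simp [Matrix.mul_apply, Fin.sum_univ_three] at h ⊢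
        linear_combination h
  have hXc2 : ∀ j, (!![(1:k),0,0;0,0,0;0,1,0]) j 2 = 0 := by
    intro j; fin_cases j <;> rfl
  have hXr1 : ∀ j, (!![(1:k),0,0;0,0,0;0,1,0]) 1 j = 0 := by
    intro j; fin_cases j <;> rfl
  have hcol := vecMul_zero_of_unit hT (c := ![(0:k), T 0 2 ^ q, T 1 2 ^ q]) (by
    rw [vecMul_three]
    funext j
    have h := hE j 2
    rw [hXc2 j, mul_zero] at h
    show 0 * T 0 j + T 0 2 ^ q * T 1 j + T 1 2 ^ q * T 2 j = 0
    linear_combination h)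
  have hT02 : T 0 2 = 0 :=
    pow_eq_zero_iff hq0 |>.mp (by simpa using congrFun hcol 1)
  have hT12 : T 1 2 = 0 :=
    pow_eq_zero_iff hq0 |>.mp (by simpa using congrFun hcol 2)
  have hrow := rows_q_zero_of_unit hp he hq hT (c := ![T 1 1, T 2 1, (0:k)]) (by
    intro j
    have h := hE 1 j
    rw [hXr1 j, mul_zero] at h
    show T 1 1 * T 0 j ^ q + T 2 1 * T 1 j ^ q + 0 * T 2 j ^ q = 0
    linear_combination h)
  have hT11 : T 1 1 = 0 := by simpa using congrFun hrow 0
  have hfin := hE 2 1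
  rw [hT12, hT11] at hfin
  simp [zero_pow hq0] at hfin
  exact hlam hfin.symm

theorem noniso02 (hp : p.Prime) (he : 0 < e) (hq : q = p ^ e) :
    ¬ ProjIso q (!![0,0,0;1,0,0;0,1,0] : Matrix (Fin 3) (Fin 3) k) !![1,0,0;0,1,0;0,0,0] := by
  have hq0 : q ≠ 0 := by subst hq; exact pow_ne_zero e hp.ne_zero
  rintro ⟨T, lam, hT, hlam, heq⟩
  have hE : ∀ i j, T 1 i * T 0 j ^ q + T 2 i * T 1 j ^ q =
      lam * (!![(1:k),0,0;0,1,0;0,0,0]) i j := by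
    intro i j
    have h := congrFun (congrFun heq i) j
    fin_cases i <;> fin_cases j <;>
      · simp [Matrix.mul_apply, Fin.sum_univ_three] at h ⊢
        linear_combination h
  have hXc2 : ∀ j, (!![(1:k),0,0;0,1,0;0,0,0]) j 2 = 0 := by
    intro j; fin_cases j <;> rfl
  have hXr2 : ∀ j, (!![(1:k),0,0;0,1,0;0,0,0]) 2 j = 0 := by
    intro j; fin_cases j <;> rfl
  have hcol := vecMul_zero_of_unit hT (c := ![(0:k), T 0 2 ^ q, T 1 2 ^ q]) (by
    rw [vecMul_three]
    funext j
    have h := hE j 2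
    rw [hXc2 j, mul_zero] at h
    show 0 * T 0 j + T 0 2 ^ q * T 1 j + T 1 2 ^ q * T 2 j = 0
    linear_combination h)
  have hT02 : T 0 2 = 0 :=
    pow_eq_zero_iff hq0 |>.mp (by simpa using congrFun hcol 1)
  have hT12 : T 1 2 = 0 :=
    pow_eq_zero_iff hq0 |>.mp (by simpa using congrFun hcol 2)
  have hrow := rows_q_zero_of_unit hp he hq hT (c := ![T 1 2, T 2 2, (0:k)]) (by
    intro j
    have h := hE 2 j
    rw [hXr2 j, mul_zero] at h
    show T 1 2 * T 0 j ^ q + T 2 2 * T 1 j ^ q + 0 * T 2 j ^ q = 0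
    linear_combination h)
  have hT22 : T 2 2 = 0 := by simpa using congrFun hrow 1
  have hcl := mulVec_zero_of_unit hT (c := ![(0:k),0,1]) (by
    rw [mulVec_three]
    funext i
    show T i 0 * 0 + T i 1 * 0 + T i 2 * 1 = 0
    have hTi2 : T i 2 = 0 := by
      fin_cases i
      · exact hT02
      · exact hT12
      · exact hT22
    rw [hTi2]; ring)
  have : (1 : k) = 0 := by simpa using congrFun hcl 2
  exact one_ne_zero this

theorem noniso12 (hp : p.Prime) (he : 0 < e) (hq : q = p ^ e) :
    ¬ ProjIso q (!![1,0,0;0,0,0;0,1,0] : Matrix (Fin 3) (Fin 3) k) !![1,0,0;0,1,0;0,0,0] := by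
  have hq0 : q ≠ 0 := by subst hq; exact pow_ne_zero e hp.ne_zero
  rintro ⟨T, lam, hT, hlam, heq⟩
  have hE : ∀ i j, T 0 i * T 0 j ^ q + T 2 i * T 1 j ^ q =
      lam * (!![(1:k),0,0;0,1,0;0,0,0]) i j := by
    intro i j
    have h := congrFun (congrFun heq i) j
    fin_cases i <;> fin_cases j <;>
      · simp [Matrix.mul_apply, Fin.sum_univ_three] at h ⊢
        linear_combination h
  have hXc2 : ∀ j, (!![(1:k),0,0;0,1,0;0,0,0]) j 2 = 0 := by
    intro j; fin_cases j <;> rfl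
  have hXr2 : ∀ j, (!![(1:k),0,0;0,1,0;0,0,0]) 2 j = 0 := by
    intro j; fin_cases j <;> rfl
  have hcol := vecMul_zero_of_unit hT (c := ![T 0 2 ^ q, (0:k), T 1 2 ^ q]) (by
    rw [vecMul_three]
    funext j
    have h := hE j 2
    rw [hXc2 j, mul_zero] at h
    show T 0 2 ^ q * T 0 j + 0 * T 1 j + T 1 2 ^ q * T 2 j = 0
    linear_combination h)
  have hT02 : T 0 2 = 0 :=
    pow_eq_zero_iff hq0 |>.mp (by simpa using congrFun hcol 0)
  have hT12 : T 1 2 = 0 :=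
    pow_eq_zero_iff hq0 |>.mp (by simpa using congrFun hcol 2)
  have hrow := rows_q_zero_of_unit hp he hq hT (c := ![T 0 2, T 2 2, (0:k)]) (by
    intro j
    have h := hE 2 j
    rw [hXr2 j, mul_zero] at h
    show T 0 2 * T 0 j ^ q + T 2 2 * T 1 j ^ q + 0 * T 2 j ^ q = 0
    linear_combination h)
  have hT22 : T 2 2 = 0 := by simpa using congrFun hrow 1
  have hcl := mulVec_zero_of_unit hT (c := ![(0:k),0,1]) (by
    rw [mulVec_three]
    funext i
    show T i 0 * 0 + T i 1 * 0 + T i 2 * 1 = 0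
    have hTi2 : T i 2 = 0 := by
      fin_cases i
      · exact hT02
      · exact hT12
      · exact hT22
    rw [hTi2]; ring)
  have : (1 : k) = 0 := by simpa using congrFun hcl 2
  exact one_ne_zero this

end NonIso



theorem pr_def (q : ℕ) (A : Matrix (Fin 3) (Fin 3) k) (x y : Fin 3 → k) :
    pr q A x y = x ⬝ᵥ (A *ᵥ qv q y) := rfl

theorem exists_dot_ne {m n : Fin 3 → k} (hm : m ≠ 0) (hn : n ≠ 0) :
    ∃ t : Fin 3 → k, m ⬝ᵥ t ≠ 0 ∧ n ⬝ᵥ t ≠ 0 := by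
  obtain ⟨i, hi⟩ := Function.ne_iff.mp hm
  obtain ⟨j, hj⟩ := Function.ne_iff.mp hn
  simp only [Pi.zero_apply] at hi hj
  by_cases h1 : n ⬝ᵥ Pi.single i 1 = 0
  · by_cases h2 : m ⬝ᵥ Pi.single j 1 = 0
    · refine ⟨Pi.single i 1 + Pi.single j 1, ?_, ?_⟩
      · rw [dotProduct_add, h2, add_zero, dotProduct_single, mul_one]
        exact hi
      · rw [dotProduct_add, h1, zero_add, dotProduct_single, mul_one]
        exact hj
    · refine ⟨Pi.single j 1, h2, ?_⟩
      rw [dotProduct_single, mul_one]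
      exact hj
  · refine ⟨Pi.single i 1, ?_, h1⟩
    rw [dotProduct_single, mul_one]
    exact hi

theorem caseX0 {p q e : ℕ} [CharP k p] [IsAlgClosed k] (hp : p.Prime) (he : 0 < e)
    (hq : q = p ^ e) (A : Matrix (Fin 3) (Fin 3) k) (u w : Fin 3 → k)
    (hu0 : u ≠ 0) (hw0 : w ≠ 0)
    (hker : A *ᵥ qv q u = 0)
    (hkerchar : ∀ x, A *ᵥ x = 0 → ∃ c : k, x = c • qv q u)
    (hwl : w ᵥ* A = 0)
    (hlkerchar : ∀ x, x ᵥ* A = 0 → ∃ c : k, x = c • w)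
    (hnpar : ¬ ∃ c : k, w = c • u)
    (hs : pr q A u w = 0) :
    ProjIso q A !![0,0,0;1,0,0;0,1,0] := by
  have hq0 : 0 < q := by subst hq; exact pow_pos hp.pos e
  have hq1 : 2 ≤ q := qtwo hp he hq
  -- the vector A *ᵥ w^{(q)} is nonzero
  have hm0 : A *ᵥ qv q w ≠ 0 := by
    intro hm
    obtain ⟨c, hc⟩ := hkerchar _ hm
    obtain ⟨c', hc'⟩ := qroot hq0 c
    have hqq : qv q w = qv q (c' • u) := by rw [qv_smul, hc', hc]
    exact hnpar ⟨c', qv_inj hp hq hqq⟩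
  -- the row vector u ᵥ* A is nonzero
  have hn0 : u ᵥ* A ≠ 0 := by
    intro hn
    obtain ⟨c, hc⟩ := hlkerchar u hn
    have hc0 : c ≠ 0 := by rintro rfl; rw [zero_smul] at hc; exact hu0 hc
    exact hnpar ⟨c⁻¹, by rw [hc, smul_smul, inv_mul_cancel₀ hc0, one_smul]⟩
  obtain ⟨n', hn'⟩ := qv_root hq0 (u ᵥ* A)
  have hn'0 : n' ≠ 0 := fun h => hn0 (by rw [← hn', h, qv_zero hq0.ne'])
  obtain ⟨t, htm, htn⟩ := exists_dot_ne hm0 hn'0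
  -- basic pairings of t
  have hα : pr q A t w ≠ 0 := by
    rw [pr_def]
    rw [dotProduct_comm]
    exact htm
  have hβval : pr q A u t = (n' ⬝ᵥ t) ^ q := by
    rw [pr_eq_vecMul, ← hn', dot_qv hp hq]
  have hβ : pr q A u t ≠ 0 := by
    rw [hβval]
    exact pow_ne_zero q htn
  -- correct t to make it isotropic
  obtain ⟨f, hf⟩ := qroot (k := k) hq0 (-(pr q A t t) * (pr q A t w)⁻¹)
  have hself : pr q A (t + f • w) (t + f • w) = 0 := by
    rw [pr_add_right hp hq, pr_add_left, pr_add_left, pr_smul_right, pr_smul_left,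
      pr_smul_left, pr_smul_right, pr_left_zero _ _ _ hwl, pr_left_zero _ _ _ hwl, hf]
    field_simp
    ring
  have hat1 : pr q A (t + f • w) w = pr q A t w := by
    rw [pr_add_left, pr_smul_left, pr_left_zero _ _ _ hwl, mul_zero, add_zero]
  have hbt1 : pr q A u (t + f • w) = pr q A u t := by
    rw [pr_add_right hp hq, pr_smul_right, hs, mul_zero, add_zero]
  -- scale
  have hq' : q - 1 + 1 = q := Nat.succ_pred_eq_of_pos hq0
  obtain ⟨c₁, hc₁⟩ := qroot (k := k) (q := q - 1) (by omega) (pr q A t w * (pr q A u t)⁻¹)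
  have hc₁0 : c₁ ≠ 0 := by
    intro h
    rw [h, zero_pow (by omega : q - 1 ≠ 0)] at hc₁
    exact hα (by
      have := hc₁.symm
      field_simp at this
      exact this.trans (mul_zero _))
  set t1 : Fin 3 → k := c₁ • (t + f • w) with ht1def
  set lam : k := c₁ * pr q A t w with hlamdef
  have hlam : lam ≠ 0 := mul_ne_zero hc₁0 hα
  -- Gram entries
  have hG10 : pr q A t1 w = lam := by
    rw [ht1def, pr_smul_left, hat1]
  have hG21 : pr q A u t1 = lam := by
    rw [ht1def, pr_smul_right, hbt1, hlamdef]
    have hcq : c₁ ^ q = c₁ ^ (q - 1) * c₁ := by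
      conv_lhs => rw [← hq']
      rw [pow_succ]
    rw [hcq, hc₁]
    field_simp
  have hG11 : pr q A t1 t1 = 0 := by
    rw [ht1def, pr_smul_left, pr_smul_right, hself]
    ring
  have hGw : ∀ x, pr q A w x = 0 := fun x => pr_left_zero _ _ x hwl
  have hGu : ∀ x, pr q A x u = 0 := fun x => pr_right_zero _ _ x hker
  have hind : ∀ c0 c1 c2 : k, c0 • w + c1 • t1 + c2 • u = 0 →
      c0 = 0 ∧ c1 = 0 ∧ c2 = 0 := by
    intro c0 c1 c2 hrel
    have hd := dot3 hrel (A *ᵥ qv q w)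
    have e0 : w ⬝ᵥ (A *ᵥ qv q w) = 0 := hGw w
    have e1 : t1 ⬝ᵥ (A *ᵥ qv q w) = lam := hG10
    have e2 : u ⬝ᵥ (A *ᵥ qv q w) = 0 := hs
    rw [e0, e1, e2, mul_zero, mul_zero, add_zero, zero_add] at hd
    have hc1 : c1 = 0 := by
      rcases mul_eq_zero.mp hd with h | h
      · exact h
      · exact absurd h hlam
    rw [hc1, zero_smul, add_zero] at hrel
    have hrel3 : c0 • w + c2 • u + (0:k) • (0 : Fin 3 → k) = 0 := by
      rw [zero_smul, add_zero]
      exact hrel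
    have hqv := qv_rel hp hq hrel3 hq0.ne'
    have happ := congrArg (fun z => A *ᵥ z) hqv
    simp only [mulVec_add, mulVec_smul, hker, smul_zero, add_zero, mulVec_zero,
      zero_pow hq0.ne', zero_smul] at happ
    have hc0q : c0 ^ q • (A *ᵥ qv q w) = 0 := happ
    have hc0 : c0 = 0 := by
      rcases smul_eq_zero.mp hc0q with h | h
      · exact pow_eq_zero_iff hq0.ne' |>.mp h
      · exact absurd h hm0
    rw [hc0, zero_smul, zero_add] at hrel
    have hc2 : c2 = 0 := by
      rcases smul_eq_zero.mp hrel with h | h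
      · exact h
      · exact absurd h hu0
    exact ⟨hc0, hc1, hc2⟩
  refine build q A _ w t1 u lam hlam hind ?_
  intro i j
  fin_cases i <;> fin_cases j
  · show pr q A w w = lam * 0
    rw [hGw]; ring
  · show pr q A w t1 = lam * 0
    rw [hGw]; ring
  · show pr q A w u = lam * 0
    rw [hGw]; ring
  · show pr q A t1 w = lam * 1
    rw [hG10]; ring
  · show pr q A t1 t1 = lam * 0
    rw [hG11]; ring
  · show pr q A t1 u = lam * 0
    rw [hGu]; ring
  · show pr q A u w = lam * 0
    rw [hs]; ring
  · show pr q A u t1 = lam * 1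
    rw [hG21]; ring
  · show pr q A u u = lam * 0
    rw [hGu]; ring


theorem caseX1 {p q e : ℕ} [CharP k p] [IsAlgClosed k] (hp : p.Prime) (he : 0 < e)
    (hq : q = p ^ e) (A : Matrix (Fin 3) (Fin 3) k) (u w : Fin 3 → k)
    (hu0 : u ≠ 0) (hw0 : w ≠ 0)
    (hker : A *ᵥ qv q u = 0)
    (hkerchar : ∀ x, A *ᵥ x = 0 → ∃ c : k, x = c • qv q u)
    (hwl : w ᵥ* A = 0)
    (hs : pr q A u w ≠ 0) :
    ProjIso q A !![1,0,0;0,0,0;0,1,0] := by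
  have hq0 : 0 < q := by subst hq; exact pow_pos hp.pos e
  obtain ⟨n', hn'⟩ := qv_root hq0 (u ᵥ* A)
  -- find t0 orthogonal to the relevant functionals
  have hdetN : (Matrix.of ![n', A *ᵥ qv q w, (0 : Fin 3 → k)]).det = 0 :=
    Matrix.det_eq_zero_of_row_eq_zero 2 (fun j => rfl)
  obtain ⟨t0, ht00, ht0⟩ := Matrix.exists_mulVec_eq_zero_iff.mpr hdetN
  have h0 : n' ⬝ᵥ t0 = 0 := by
    have := congrFun ht0 0
    simpa [Matrix.mulVec, dotProduct, Fin.sum_univ_three] using this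
  have h1 : (A *ᵥ qv q w) ⬝ᵥ t0 = 0 := by
    have := congrFun ht0 1
    simpa [Matrix.mulVec, dotProduct, Fin.sum_univ_three] using this
  have hg1 : pr q A u t0 = 0 := by
    rw [pr_eq_vecMul, ← hn', dot_qv hp hq, h0, zero_pow hq0.ne']
  have hg2 : pr q A t0 w = 0 := by
    rw [pr_def, dotProduct_comm]
    exact h1
  have hGw : ∀ x, pr q A w x = 0 := fun x => pr_left_zero _ _ x hwl
  have hGu : ∀ x, pr q A x u = 0 := fun x => pr_right_zero _ _ x hker
  -- independence of t0, w, u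
  have hind0 : ∀ c0 c1 c2 : k, c0 • t0 + c1 • w + c2 • u = 0 →
      c0 = 0 ∧ c1 = 0 ∧ c2 = 0 := by
    intro c0 c1 c2 hrel
    have hd := dot3 hrel (A *ᵥ qv q w)
    have e0 : t0 ⬝ᵥ (A *ᵥ qv q w) = 0 := by rw [dotProduct_comm]; exact h1
    have e1 : w ⬝ᵥ (A *ᵥ qv q w) = 0 := hGw w
    have e2 : u ⬝ᵥ (A *ᵥ qv q w) = pr q A u w := rfl
    rw [e0, e1, e2, mul_zero, mul_zero, add_zero, zero_add] at hd
    have hc2 : c2 = 0 := by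
      rcases mul_eq_zero.mp hd with h | h
      · exact h
      · exact absurd h hs
    rw [hc2, zero_smul, add_zero] at hrel
    have hrel3 : c0 • t0 + c1 • w + (0:k) • (0 : Fin 3 → k) = 0 := by
      rw [zero_smul, add_zero]; exact hrel
    have hqv := qv_rel hp hq hrel3 hq0.ne'
    have hd2 := dot3 hqv (u ᵥ* A)
    have f0 : qv q t0 ⬝ᵥ (u ᵥ* A) = 0 := by
      rw [dotProduct_comm, ← pr_eq_vecMul]
      exact hg1
    have f1 : qv q w ⬝ᵥ (u ᵥ* A) = pr q A u w := by
      rw [dotProduct_comm, ← pr_eq_vecMul]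
    rw [f0, f1, mul_zero, zero_add, zero_pow hq0.ne', zero_mul, add_zero] at hd2
    have hc1 : c1 = 0 := by
      rcases mul_eq_zero.mp hd2 with h | h
      · exact pow_eq_zero_iff hq0.ne' |>.mp h
      · exact absurd h hs
    rw [hc1, zero_smul, add_zero] at hrel
    have hc0 : c0 = 0 := by
      rcases smul_eq_zero.mp hrel with h | h
      · exact h
      · exact absurd h ht00
    exact ⟨hc0, hc1, hc2⟩
  -- the diagonal value is nonzero
  have hlam : pr q A t0 t0 ≠ 0 := by
    intro hl
    have hy : A *ᵥ qv q t0 = 0 := by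
      apply dots_eq_zero t0 w u hind0
      · exact hl
      · exact hGw t0
      · exact hg1
    obtain ⟨c, hc⟩ := hkerchar _ hy
    obtain ⟨c', hc'⟩ := qroot hq0 c
    have hqq : qv q t0 = qv q (c' • u) := by rw [qv_smul, hc', hc]
    have ht0u : t0 = c' • u := qv_inj hp hq hqq
    have := (hind0 1 0 (-c') (by
      rw [one_smul, zero_smul, add_zero, ht0u, neg_smul, add_neg_cancel])).1
    exact one_ne_zero this
  set lam : k := pr q A t0 t0 with hlamdef
  set coef : k := lam * (pr q A u w)⁻¹ with hcoefdef
  have hcoef0 : coef ≠ 0 := mul_ne_zero hlam (inv_ne_zero hs)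
  have hind : ∀ c0 c1 c2 : k, c0 • t0 + c1 • w + c2 • (coef • u) = 0 →
      c0 = 0 ∧ c1 = 0 ∧ c2 = 0 := by
    intro c0 c1 c2 hrel
    rw [smul_smul] at hrel
    obtain ⟨hc0, hc1, hc2⟩ := hind0 _ _ _ hrel
    refine ⟨hc0, hc1, ?_⟩
    rcases mul_eq_zero.mp hc2 with h | h
    · exact h
    · exact absurd h hcoef0
  refine build q A _ t0 w (coef • u) lam hlam hind ?_
  intro i j
  fin_cases i <;> fin_cases j
  · show pr q A t0 t0 = lam * 1
    rw [← hlamdef]; ring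
  · show pr q A t0 w = lam * 0
    rw [hg2]; ring
  · show pr q A t0 (coef • u) = lam * 0
    rw [pr_smul_right, hGu]; ring
  · show pr q A w t0 = lam * 0
    rw [hGw]; ring
  · show pr q A w w = lam * 0
    rw [hGw]; ring
  · show pr q A w (coef • u) = lam * 0
    rw [hGw]; ring
  · show pr q A (coef • u) t0 = lam * 0
    rw [pr_smul_left, hg1]; ring
  · show pr q A (coef • u) w = lam * 1
    rw [pr_smul_left, hcoefdef]
    field_simp
  · show pr q A (coef • u) (coef • u) = lam * 0
    rw [pr_smul_left, pr_smul_right, hGu]; ring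


theorem caseX2core {p q e : ℕ} [CharP k p] [IsAlgClosed k] (hp : p.Prime) (he : 0 < e)
    (hq : q = p ^ e) (A : Matrix (Fin 3) (Fin 3) k) (u : Fin 3 → k) (hu0 : u ≠ 0)
    (hker : A *ᵥ qv q u = 0)
    (hkerchar : ∀ x, A *ᵥ x = 0 → ∃ c : k, x = c • qv q u)
    (hul : u ᵥ* A = 0)
    (hlkerchar : ∀ x, x ᵥ* A = 0 → ∃ c : k, x = c • u)
    (ea eb : Fin 3 → k)
    (hinde : ∀ c0 c1 c2 : k, c0 • ea + c1 • eb + c2 • u = 0 →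
      c0 = 0 ∧ c1 = 0 ∧ c2 = 0) :
    ProjIso q A !![1,0,0;0,1,0;0,0,0] := by
  have hq0 : 0 < q := by subst hq; exact pow_pos hp.pos e
  have hq2 : 2 ≤ q := qtwo hp he hq
  have hq' : q - 1 + 1 = q := Nat.succ_pred_eq_of_pos hq0
  have hGuL : ∀ x, pr q A u x = 0 := fun x => pr_left_zero _ _ x hul
  have hGuR : ∀ x, pr q A x u = 0 := fun x => pr_right_zero _ _ x hker
  have hcombo : ∀ (t s : Fin 3 → k) (x1 y1 : k),
      pr q A (x1 • t + s) (y1 • t + s) =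
        x1 * y1 ^ q * pr q A t t + x1 * pr q A t s + y1 ^ q * pr q A s t + pr q A s s := by
    intro t s x1 y1
    rw [pr_add_left, pr_add_right hp hq, pr_add_right hp hq, pr_smul_left, pr_smul_left,
      pr_smul_right, pr_smul_right]
    ring
  -- find an isotropic vector t with companion s
  obtain ⟨t, s, hts, hindts⟩ : ∃ t s : Fin 3 → k, pr q A t t = 0 ∧
      ∀ c0 c1 c2 : k, c0 • t + c1 • s + c2 • u = 0 → c0 = 0 ∧ c1 = 0 ∧ c2 = 0 := by
    by_cases ha' : pr q A ea ea = 0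
    · exact ⟨ea, eb, ha', hinde⟩
    · set pol : Polynomial k := Polynomial.C (pr q A ea ea) * Polynomial.X ^ (q + 1) +
        Polynomial.C (pr q A eb ea) * Polynomial.X ^ q +
        Polynomial.C (pr q A ea eb) * Polynomial.X +
        Polynomial.C (pr q A eb eb) with hpol
      have hco : pol.coeff (q + 1) = pr q A ea ea := by
        rw [hpol]
        simp [Polynomial.coeff_add, Polynomial.coeff_C_mul, Polynomial.coeff_X_pow,
          Polynomial.coeff_C, Polynomial.coeff_X,
          (by omega : ¬ q + 1 = q), (by omega : ¬ q + 1 = 1), (by omega : ¬ q + 1 = 0),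
          (by omega : ¬ q = q + 1), (by omega : ¬ (1 : ℕ) = q + 1)]
        exact fun h => absurd h (by omega)
      have hdeg : pol.degree ≠ 0 := by
        have hle : ((q + 1 : ℕ) : WithBot ℕ) ≤ pol.degree :=
          Polynomial.le_degree_of_ne_zero (by rw [hco]; exact ha')
        intro h0
        rw [h0] at hle
        have : (q + 1 : ℕ) ≤ 0 := by exact_mod_cast hle
        omega
      obtain ⟨x, hx⟩ := IsAlgClosed.exists_root pol hdeg
      have heval : pr q A ea ea * x ^ (q + 1) + pr q A eb ea * x ^ q +
          pr q A ea eb * x + pr q A eb eb = 0 := by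
        have := hx
        rw [Polynomial.IsRoot, hpol] at this
        simpa using this
      refine ⟨x • ea + eb, ea, ?_, ?_⟩
      · rw [hcombo]
        have hpow : x ^ (q + 1) = x * x ^ q := by rw [pow_succ']
        linear_combination heval - pr q A ea ea * hpow
      · intro c0 c1 c2 hrel
        have hrel2 : (c0 * x + c1) • ea + c0 • eb + c2 • u = 0 := by
          rw [← hrel]
          module
        obtain ⟨h1, h2, h3⟩ := hinde _ _ _ hrel2
        refine ⟨h2, ?_, h3⟩
        rw [h2, zero_mul, zero_add] at h1
        exact h1
  -- independence of the q-th powers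
  have hindqv : ∀ c0 c1 c2 : k, c0 • qv q t + c1 • qv q s + c2 • qv q u = 0 →
      c0 = 0 ∧ c1 = 0 ∧ c2 = 0 := by
    intro c0 c1 c2 hrel
    obtain ⟨r0, hr0⟩ := qroot hq0 c0
    obtain ⟨r1, hr1⟩ := qroot hq0 c1
    obtain ⟨r2, hr2⟩ := qroot hq0 c2
    have : qv q (r0 • t + r1 • s + r2 • u) = 0 := by
      rw [qv_add hp hq, qv_add hp hq, qv_smul, qv_smul, qv_smul, hr0, hr1, hr2]
      exact hrel
    obtain ⟨h0, h1, h2⟩ := hindts _ _ _ (qv_eq_zero hq0.ne' this)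
    exact ⟨by rw [← hr0, h0, zero_pow hq0.ne'],
      by rw [← hr1, h1, zero_pow hq0.ne'],
      by rw [← hr2, h2, zero_pow hq0.ne']⟩
  -- the off-diagonal pairings are nonzero
  have hb : pr q A t s ≠ 0 := by
    intro hb0
    have hr : ∀ x, qv q x ⬝ᵥ (t ᵥ* A) = pr q A t x := by
      intro x
      rw [dotProduct_comm, ← pr_eq_vecMul]
    have hzero : t ᵥ* A = 0 := by
      apply dots_eq_zero (qv q t) (qv q s) (qv q u) hindqv
      · rw [hr]; exact hts
      · rw [hr]; exact hb0
      · rw [hr]; exact hGuR t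
    obtain ⟨c, hc⟩ := hlkerchar t hzero
    have := (hindts 1 0 (-c) (by
      rw [one_smul, zero_smul, add_zero, hc, neg_smul, add_neg_cancel])).1
    exact one_ne_zero this
  have hcc : pr q A s t ≠ 0 := by
    intro hc0
    have hzero : A *ᵥ qv q t = 0 := by
      apply dots_eq_zero t s u hindts
      · exact hts
      · exact hc0
      · exact hGuL t
    obtain ⟨c, hc⟩ := hkerchar _ hzero
    obtain ⟨c', hc'⟩ := qroot hq0 c
    have hqq : qv q t = qv q (c' • u) := by rw [qv_smul, hc', hc]
    have htu : t = c' • u := qv_inj hp hq hqq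
    have := (hindts 1 0 (-c') (by
      rw [one_smul, zero_smul, add_zero, htu, neg_smul, add_neg_cancel])).1
    exact one_ne_zero this
  -- solve for the second basis vector
  obtain ⟨z, hz⟩ := qroot (k := k) (q := q - 1) (by omega)
    (pr q A t s ^ q * (pr q A s t)⁻¹)
  have hz0 : z ≠ 0 := by
    intro h
    rw [h, zero_pow (by omega : q - 1 ≠ 0)] at hz
    exact (mul_ne_zero (pow_ne_zero q hb) (inv_ne_zero hcc)) hz.symm
  set pol2 : Polynomial k := Polynomial.C (pr q A s t) * Polynomial.X ^ q +
      Polynomial.C (pr q A t s) * Polynomial.X +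
      Polynomial.C (pr q A s s - z) with hpol2
  have hco2 : pol2.coeff q = pr q A s t := by
    rw [hpol2]
    simp [Polynomial.coeff_add, Polynomial.coeff_C_mul, Polynomial.coeff_X_pow,
      Polynomial.coeff_C, Polynomial.coeff_X]
    split_ifs with h1 h2 <;>
      first
        | exact absurd h1 (by omega)
        | exact absurd h2 (by omega)
        | ring
  have hdeg2 : pol2.degree ≠ 0 := by
    have hle : ((q : ℕ) : WithBot ℕ) ≤ pol2.degree :=
      Polynomial.le_degree_of_ne_zero (by rw [hco2]; exact hcc)
    intro h0
    rw [h0] at hle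
    have : (q : ℕ) ≤ 0 := by exact_mod_cast hle
    omega
  obtain ⟨x, hx⟩ := IsAlgClosed.exists_root pol2 hdeg2
  have heval : pr q A s t * x ^ q + pr q A t s * x + (pr q A s s - z) = 0 := by
    have := hx
    rw [Polynomial.IsRoot, hpol2] at this
    simpa using this
  -- construct the orthogonal pair
  set y0 : k := x - z * (pr q A t s)⁻¹ with hy0def
  have hy0q : y0 ^ q = x ^ q - (z * (pr q A t s)⁻¹) ^ q := by
    rw [hy0def, sub_eq_add_neg, qadd hp hq, qneg hp hq, ← sub_eq_add_neg]
  have hzq : z ^ q = pr q A t s ^ q * (pr q A s t)⁻¹ * z := by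
    conv_lhs => rw [← hq', pow_succ, hz]
  have key : pr q A s t * (z * (pr q A t s)⁻¹) ^ q = z := by
    rw [mul_pow, hzq, inv_pow]
    field_simp
  have hyq : pr q A s t * y0 ^ q = -(pr q A t s * x) - pr q A s s := by
    rw [hy0q, mul_sub, key]
    linear_combination heval
  have hby0 : pr q A t s * y0 = pr q A t s * x - z := by
    rw [hy0def]
    field_simp
  obtain ⟨β, hβ⟩ := qroot (k := k) (q := q + 1) (by omega) (-1 : k)
  have hβ0 : β ≠ 0 := by
    intro h
    rw [h, zero_pow (by omega : q + 1 ≠ 0)] at hβ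
    exact one_ne_zero (by linear_combination hβ : (1:k) = 0)
  set φ : Fin 3 → k := x • t + s with hφdef
  set ψ : Fin 3 → k := y0 • t + s with hψdef
  -- Gram entries
  have prφφ : pr q A φ φ = z := by
    rw [hφdef, hcombo, hts]
    linear_combination heval
  have prφψ : pr q A φ ψ = 0 := by
    rw [hφdef, hψdef, hcombo, hts]
    linear_combination hyq
  have prψφ : pr q A ψ φ = 0 := by
    rw [hψdef, hφdef, hcombo, hts]
    linear_combination hby0 + heval
  have prψψ : pr q A ψ ψ = -z := by
    rw [hψdef, hcombo, hts]
    linear_combination hby0 + hyq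
  have hβq1 : β ^ q * β = -1 := by rw [← pow_succ]; exact hβ
  have prψ'ψ' : pr q A (β • ψ) (β • ψ) = z := by
    rw [pr_smul_left, pr_smul_right, prψψ]
    calc β * (β ^ q * -z) = β ^ q * β * -z := by ring
      _ = z := by rw [hβq1]; ring
  -- independence of the final triple
  have hind : ∀ c0 c1 c2 : k, c0 • φ + c1 • (β • ψ) + c2 • u = 0 →
      c0 = 0 ∧ c1 = 0 ∧ c2 = 0 := by
    intro c0 c1 c2 hrel
    have hd0 := dot3 hrel (A *ᵥ qv q φ)
    have g0 : φ ⬝ᵥ (A *ᵥ qv q φ) = z := prφφ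
    have g1 : (β • ψ) ⬝ᵥ (A *ᵥ qv q φ) = 0 := by
      have : pr q A (β • ψ) φ = 0 := by rw [pr_smul_left, prψφ, mul_zero]
      exact this
    have g2 : u ⬝ᵥ (A *ᵥ qv q φ) = 0 := hGuL φ
    rw [g0, g1, g2, mul_zero, mul_zero, add_zero, add_zero] at hd0
    have hc0 : c0 = 0 := by
      rcases mul_eq_zero.mp hd0 with h | h
      · exact h
      · exact absurd h hz0
    have hd1 := dot3 hrel (A *ᵥ qv q (β • ψ))
    have g3 : φ ⬝ᵥ (A *ᵥ qv q (β • ψ)) = 0 := by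
      have : pr q A φ (β • ψ) = 0 := by rw [pr_smul_right, prφψ, mul_zero]
      exact this
    have g4 : (β • ψ) ⬝ᵥ (A *ᵥ qv q (β • ψ)) = z := prψ'ψ'
    have g5 : u ⬝ᵥ (A *ᵥ qv q (β • ψ)) = 0 := hGuL _
    rw [g3, g4, g5, mul_zero, mul_zero, zero_add, add_zero] at hd1
    have hc1 : c1 = 0 := by
      rcases mul_eq_zero.mp hd1 with h | h
      · exact h
      · exact absurd h hz0
    rw [hc0, hc1, zero_smul, zero_smul, zero_add, zero_add] at hrel
    have hc2 : c2 = 0 := by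
      rcases smul_eq_zero.mp hrel with h | h
      · exact h
      · exact absurd h hu0
    exact ⟨hc0, hc1, hc2⟩
  refine build q A _ φ (β • ψ) u z hz0 hind ?_
  intro i j
  fin_cases i <;> fin_cases j
  · show pr q A φ φ = z * 1
    rw [prφφ]; ring
  · show pr q A φ (β • ψ) = z * 0
    rw [pr_smul_right, prφψ]; ring
  · show pr q A φ u = z * 0
    rw [hGuR]; ring
  · show pr q A (β • ψ) φ = z * 0
    rw [pr_smul_left, prψφ]; ring
  · show pr q A (β • ψ) (β • ψ) = z * 1
    rw [prψ'ψ']; ring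
  · show pr q A (β • ψ) u = z * 0
    rw [hGuR]; ring
  · show pr q A u φ = z * 0
    rw [hGuL]; ring
  · show pr q A u (β • ψ) = z * 0
    rw [hGuL]; ring
  · show pr q A u u = z * 0
    rw [hGuL]; ring

theorem caseX2 {p q e : ℕ} [CharP k p] [IsAlgClosed k] (hp : p.Prime) (he : 0 < e)
    (hq : q = p ^ e) (A : Matrix (Fin 3) (Fin 3) k) (u : Fin 3 → k) (hu0 : u ≠ 0)
    (hker : A *ᵥ qv q u = 0)
    (hkerchar : ∀ x, A *ᵥ x = 0 → ∃ c : k, x = c • qv q u)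
    (hul : u ᵥ* A = 0)
    (hlkerchar : ∀ x, x ᵥ* A = 0 → ∃ c : k, x = c • u) :
    ProjIso q A !![1,0,0;0,1,0;0,0,0] := by
  obtain ⟨i, hi⟩ := Function.ne_iff.mp hu0
  simp only [Pi.zero_apply] at hi
  fin_cases i
  · refine caseX2core hp he hq A u hu0 hker hkerchar hul hlkerchar
      (Pi.single 1 1) (Pi.single 2 1) ?_
    intro c0 c1 c2 h
    have h0 := congrFun h 0
    have h1 := congrFun h 1
    have h2 := congrFun h 2
    simp [Pi.single_apply] at h0 h1 h2
    have hc2 : c2 = 0 := by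
      rcases h0 with h | h
      · exact h
      · exact absurd h hi
    rw [hc2, zero_mul, add_zero] at h1 h2
    exact ⟨h1, h2, hc2⟩
  · refine caseX2core hp he hq A u hu0 hker hkerchar hul hlkerchar
      (Pi.single 0 1) (Pi.single 2 1) ?_
    intro c0 c1 c2 h
    have h0 := congrFun h 0
    have h1 := congrFun h 1
    have h2 := congrFun h 2
    simp [Pi.single_apply] at h0 h1 h2
    have hc2 : c2 = 0 := by
      rcases h1 with h | h
      · exact h
      · exact absurd h hi
    rw [hc2, zero_mul, add_zero] at h0 h2
    exact ⟨h0, h2, hc2⟩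
  · refine caseX2core hp he hq A u hu0 hker hkerchar hul hlkerchar
      (Pi.single 0 1) (Pi.single 1 1) ?_
    intro c0 c1 c2 h
    have h0 := congrFun h 0
    have h1 := congrFun h 1
    have h2 := congrFun h 2
    simp [Pi.single_apply] at h0 h1 h2
    have hc2 : c2 = 0 := by
      rcases h2 with h | h
      · exact h
      · exact absurd h hi
    rw [hc2, zero_mul, add_zero] at h0 h1
    exact ⟨h0, h1, hc2⟩

end RankTwoAux

/-- Theorem 5(ii): a plane curve `X_A` with `rank A = 2` is projectively isomorphic to
exactly one of `X₀ : x₀^q x₁ + x₁^q x₂ = 0`, `X₁ : x₀^{q+1} + x₁^q x₂ = 0`,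
`X₂ : x₀^{q+1} + x₁^{q+1} = 0`. -/
theorem rank_two_plane_curve (p q e : ℕ) (hp : p.Prime) (he : 0 < e) (hq : q = p ^ e)
    (k : Type*) [Field k] [IsAlgClosed k] [CharP k p]
    (A : Matrix (Fin 3) (Fin 3) k) (hA : A.rank = 2) :
    let X0 : Matrix (Fin 3) (Fin 3) k := !![0, 0, 0; 1, 0, 0; 0, 1, 0]
    let X1 : Matrix (Fin 3) (Fin 3) k := !![1, 0, 0; 0, 0, 0; 0, 1, 0]
    let X2 : Matrix (Fin 3) (Fin 3) k := !![1, 0, 0; 0, 1, 0; 0, 0, 0]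
    (ProjIso q A X0 ∨ ProjIso q A X1 ∨ ProjIso q A X2) ∧
      ¬(ProjIso q A X0 ∧ ProjIso q A X1) ∧
      ¬(ProjIso q A X0 ∧ ProjIso q A X2) ∧
      ¬(ProjIso q A X1 ∧ ProjIso q A X2) := by
  intro X0 X1 X2
  have hq0 : 0 < q := by subst hq; exact pow_pos hp.pos e
  obtain ⟨v, hv0, hvker, hvchar⟩ := RankTwoAux.ker_rank_two A hA
  obtain ⟨w, hw0, hwl, hwchar⟩ := RankTwoAux.ker_rank_two_left A hA
  obtain ⟨u, hu⟩ := RankTwoAux.qv_root hq0 v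
  have hu0 : u ≠ 0 := by
    rintro rfl
    rw [RankTwoAux.qv_zero hq0.ne'] at hu
    exact hv0 hu.symm
  have hker : A *ᵥ RankTwoAux.qv q u = 0 := by rw [hu]; exact hvker
  have hkerchar : ∀ x, A *ᵥ x = 0 → ∃ c : k, x = c • RankTwoAux.qv q u := by
    intro x hx
    obtain ⟨c, hc⟩ := hvchar x hx
    exact ⟨c, by rw [hu]; exact hc⟩
  have hmain : ProjIso q A X0 ∨ ProjIso q A X1 ∨ ProjIso q A X2 := by
    by_cases hpar : ∃ c : k, w = c • u
    · right; right
      obtain ⟨c, hc⟩ := hpar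
      have hc0 : c ≠ 0 := by rintro rfl; rw [zero_smul] at hc; exact hw0 hc
      have hul : u ᵥ* A = 0 := by
        have h2 : (c • u) ᵥ* A = 0 := by rw [← hc]; exact hwl
        rw [Matrix.smul_vecMul] at h2
        rcases smul_eq_zero.mp h2 with h | h
        · exact absurd h hc0
        · exact h
      have hlkerchar' : ∀ x, x ᵥ* A = 0 → ∃ d : k, x = d • u := by
        intro x hx
        obtain ⟨d, hd⟩ := hwchar x hx
        exact ⟨d * c, by rw [hd, hc, smul_smul]⟩
      exact RankTwoAux.caseX2 hp he hq A u hu0 hker hkerchar hul hlkerchar'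
    · by_cases hs : RankTwoAux.pr q A u w = 0
      · left
        exact RankTwoAux.caseX0 hp he hq A u w hu0 hw0 hker hkerchar hwl hwchar hpar hs
      · right; left
        exact RankTwoAux.caseX1 hp he hq A u w hu0 hw0 hker hkerchar hwl hs
  refine ⟨hmain, ?_, ?_, ?_⟩
  · rintro ⟨h0, h1⟩
    exact RankTwoAux.noniso01 hp he hq
      (RankTwoAux.projIso_trans hp hq (RankTwoAux.projIso_symm hp hq h0) h1)
  · rintro ⟨h0, h2⟩
    exact RankTwoAux.noniso02 hp he hq
      (RankTwoAux.projIso_trans hp hq (RankTwoAux.projIso_symm hp hq h0) h2)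
  · rintro ⟨h1, h2⟩
    exact RankTwoAux.noniso12 hp he hq
      (RankTwoAux.projIso_trans hp hq (RankTwoAux.projIso_symm hp hq h1) h2)
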